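/- Let ℝⁿ₊ = {x ∈ ℝⁿ : x₁ > 0}. Let h : [0,∞) → ℝ be continuous with h(s) > 0 for every s > 0. Let w : closure(ℝⁿ₊)×ℝ → ℝ be bounded and continuous, once continuously differentiable in t and twice continuously differentiable in x on ℝⁿ₊×ℝ, suppose that (w_t(x,t) − Δw(x,t))·sign(w(x,t)) ≤ −h(|w(x,t)|) for all (x,t) ∈ ℝⁿ₊×ℝ, and suppose w(x,t) = 0 whenever x₁ = 0. Then w ≡ 0. -/

import Mathlib

open Set Metric
open Filter Topology

/-- Time derivative `u_t`. -/
noncomputable def pdt {n : ℕ} (u : EuclideanSpace ℝ (Fin n) → ℝ → ℝ)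
    (x : EuclideanSpace ℝ (Fin n)) (t : ℝ) : ℝ :=
  deriv (fun s => u x s) t

/-- Laplacian in the space variables: sum of second derivatives along coordinate directions. -/
noncomputable def plap {n : ℕ} (u : EuclideanSpace ℝ (Fin n) → ℝ → ℝ)
    (x : EuclideanSpace ℝ (Fin n)) (t : ℝ) : ℝ :=
  ∑ i : Fin n, iteratedDeriv 2 (fun s : ℝ => u (x + s • EuclideanSpace.single i (1 : ℝ)) t) 0

/-- `C^{2,1}` regularity on `Ω × I`: twice continuously differentiable in `x`,
once continuously differentiable in `t`. -/
def isC21On {n : ℕ} (u : EuclideanSpace ℝ (Fin n) → ℝ → ℝ)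
    (Ω : Set (EuclideanSpace ℝ (Fin n))) (I : Set ℝ) : Prop :=
  (∀ t ∈ I, ContDiffOn ℝ 2 (fun x => u x t) Ω) ∧
  (∀ x ∈ Ω, ContDiffOn ℝ 1 (fun s => u x s) I)

/-- One-sided derivative at a right-endpoint max. -/
lemma deriv_nonneg_of_max_left {f : ℝ → ℝ} {a b : ℝ} (hab : a < b)
    (hf : DifferentiableAt ℝ f b) (hmax : ∀ t ∈ Ioo a b, f t ≤ f b) :
    0 ≤ deriv f b := by
  have hs : Tendsto (slope f b) (𝓝[≠] b) (𝓝 (deriv f b)) :=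
    hasDerivAt_iff_tendsto_slope.mp hf.hasDerivAt
  have hs' : Tendsto (slope f b) (𝓝[<] b) (𝓝 (deriv f b)) :=
    hs.mono_left (nhdsWithin_mono _ (fun x hx => ne_of_lt hx))
  refine ge_of_tendsto hs' ?_
  filter_upwards [Ioo_mem_nhdsLT_of_mem ⟨hab, le_refl b⟩] with t ht
  have h1 : f t - f b ≤ 0 := sub_nonpos.mpr (hmax t ht)
  have h2 : t - b < 0 := sub_neg.mpr ht.2
  rw [slope_def_field]
  exact div_nonneg_of_nonpos h1 h2.le

/-- Second derivative is nonpositive at an interior local maximum. -/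
lemma deriv2_nonpos_of_isLocalMax {g : ℝ → ℝ} (hg : ContDiffAt ℝ 2 g 0)
    (hmax : IsLocalMax g 0) : deriv (deriv g) 0 ≤ 0 := by
  by_contra hlt
  push_neg at hlt
  obtain ⟨u, huo, hu0, hgu⟩ := hg.contDiffOn' le_rfl (by simp)
  rw [insert_eq_of_mem (mem_univ _), univ_inter] at hgu
  have hd1 : ContDiffOn ℝ 1 (deriv g) u := hgu.deriv_of_isOpen huo le_rfl
  have hcont2 : ContinuousAt (deriv (deriv g)) 0 := by
    have := (hd1.continuousOn_deriv_of_isOpen huo le_rfl)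
    exact this.continuousAt (huo.mem_nhds hu0)
  -- find a small interval where deriv (deriv g) > 0, g ≤ g 0, and inside u
  have h1 : ∀ᶠ s in 𝓝 (0:ℝ), 0 < deriv (deriv g) s :=
    continuousAt_const.eventually_lt hcont2 hlt
  have h2 : ∀ᶠ s in 𝓝 (0:ℝ), g s ≤ g 0 := hmax
  have h3 : ∀ᶠ s in 𝓝 (0:ℝ), s ∈ u := huo.mem_nhds hu0
  obtain ⟨δ, hδ, hδall⟩ := Metric.eventually_nhds_iff_ball.mp (h1.and (h2.and h3))
  set I : Set ℝ := Ioo (-δ) δ with hI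
  have hIball : I ⊆ ball (0:ℝ) δ := by
    intro s hs
    rw [mem_ball, Real.dist_eq, sub_zero, abs_lt]
    exact ⟨hs.1, hs.2⟩
  have hIu : I ⊆ u := fun s hs => (hδall s (hIball hs)).2.2
  -- deriv g is strictly monotone on I
  have hmono : StrictMonoOn (deriv g) I := by
    apply strictMonoOn_of_deriv_pos (convex_Ioo _ _)
    · exact (hd1.mono hIu).continuousOn
    · intro s hs
      rw [interior_Ioo] at hs
      exact (hδall s (hIball hs)).1
  have hg'0 : deriv g 0 = 0 := hmax.deriv_eq_zero
  have h0I : (0:ℝ) ∈ I := by constructor <;> simp [hδ, neg_neg] <;> linarith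
  -- deriv g > 0 on (0, δ)
  have hgpos : ∀ s ∈ Ioo (0:ℝ) δ, 0 < deriv g s := by
    intro s hs
    have : deriv g 0 < deriv g s := hmono h0I ⟨lt_trans (by linarith) hs.1, hs.2⟩ hs.1
    linarith [hg'0]
  -- g strictly increasing on [0, δ)
  have hmono2 : StrictMonoOn g (Ico 0 δ) := by
    apply strictMonoOn_of_deriv_pos (convex_Ico _ _)
    · apply (hgu.continuousOn).mono
      intro s hs
      exact hIu ⟨lt_of_lt_of_le (by linarith) hs.1, hs.2⟩
    · intro s hs
      rw [interior_Ico] at hs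
      exact hgpos s hs
  have : g 0 < g (δ/2) := hmono2 ⟨le_refl 0, hδ⟩ ⟨by linarith, by linarith⟩ (by linarith)
  have hle : g (δ/2) ≤ g 0 := (hδall (δ/2) (by rw [mem_ball, Real.dist_eq, sub_zero, abs_of_pos (by linarith)]; linarith)).2.1
  linarith

lemma deriv_quadratic (A B C : ℝ) :
    deriv (fun s : ℝ => A*s^2 + B*s + C) = fun s => 2*A*s + B := by
  funext s
  have h : HasDerivAt (fun s : ℝ => A*s^2 + B*s + C) (A*(2*s^1) + B) s := by
    have h1 : HasDerivAt (fun s : ℝ => s^2) ((2:ℕ)*s^1) s := hasDerivAt_pow 2 s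
    have h2 : HasDerivAt (fun s : ℝ => A*s^2) (A*(2*s^1)) s := by
      simpa using h1.const_mul A
    have h3 : HasDerivAt (fun s : ℝ => B*s) B s := by
      simpa using (hasDerivAt_id s).const_mul B
    simpa using (h2.add h3).add_const C
  rw [h.deriv]; ring

lemma deriv2_quadratic (A B C : ℝ) :
    deriv (deriv (fun s : ℝ => A*s^2 + B*s + C)) 0 = 2*A := by
  rw [deriv_quadratic]
  have h : HasDerivAt (fun s : ℝ => 2*A*s + B) (2*A) (0:ℝ) := by
    simpa using ((hasDerivAt_id (0:ℝ)).const_mul (2*A)).add_const B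
  simpa using h.deriv

lemma contDiff_quadratic (A B C : ℝ) : ContDiff ℝ 2 (fun s : ℝ => A*s^2 + B*s + C) :=
  ((contDiff_const.mul (contDiff_id.pow 2)).add (contDiff_const.mul contDiff_id)).add contDiff_const

lemma deriv2_add_quadratic {f : ℝ → ℝ} (hf : ContDiffAt ℝ 2 f 0) (A B C : ℝ) :
    deriv (deriv (fun s => f s + (A*s^2 + B*s + C))) 0
      = deriv (deriv f) 0 + 2*A := by
  obtain ⟨u, huo, hu0, hfu⟩ := hf.contDiffOn' le_rfl (by simp)
  rw [insert_eq_of_mem (mem_univ _), univ_inter] at hfu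
  have hq : ∀ s : ℝ, DifferentiableAt ℝ (fun s : ℝ => A*s^2 + B*s + C) s := by
    intro s
    exact (((differentiable_id.pow 2).const_mul A).add ((differentiable_id).const_mul B)).add_const C |>.differentiableAt
  have hdf : ∀ s ∈ u, DifferentiableAt ℝ f s := fun s hs =>
    (hfu.differentiableOn (by norm_num)).differentiableAt (huo.mem_nhds hs)
  have heq : deriv (fun s => f s + (A*s^2 + B*s + C))
      =ᶠ[nhds (0:ℝ)] fun s => deriv f s + (2*A*s + B) := by
    filter_upwards [huo.mem_nhds hu0] with s hs
    rw [deriv_fun_add (hdf s hs) (hq s), deriv_quadratic]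
  rw [heq.deriv_eq]
  have hdf' : DifferentiableAt ℝ (deriv f) 0 := by
    have h2 : ContDiffOn ℝ 1 (deriv f) u := hfu.deriv_of_isOpen huo le_rfl
    exact (h2.differentiableOn (by norm_num)).differentiableAt (huo.mem_nhds hu0)
  have hq' : DifferentiableAt ℝ (fun s : ℝ => 2*A*s + B) 0 :=
    ((differentiable_id.const_mul (2*A)).add_const B).differentiableAt
  rw [deriv_fun_add hdf' hq']
  have h : HasDerivAt (fun s : ℝ => 2*A*s + B) (2*A) (0:ℝ) := by
    simpa using ((hasDerivAt_id (0:ℝ)).const_mul (2*A)).add_const B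
  rw [h.deriv]

set_option maxHeartbeats 1000000 in
lemma key_halfspace
    (n : ℕ) (hn : 0 < n) (h : ℝ → ℝ)
    (hcont : ContinuousOn h (Ici 0)) (hpos : ∀ s : ℝ, 0 < s → 0 < h s)
    (w : EuclideanSpace ℝ (Fin n) → ℝ → ℝ)
    (hbdd : ∃ M : ℝ, ∀ x t, |w x t| ≤ M)
    (hc : ContinuousOn (fun p : EuclideanSpace ℝ (Fin n) × ℝ => w p.1 p.2)
      ({x : EuclideanSpace ℝ (Fin n) | 0 ≤ x ⟨0, hn⟩} ×ˢ univ))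
    (hreg : isC21On w {x : EuclideanSpace ℝ (Fin n) | 0 < x ⟨0, hn⟩} univ)
    (hineq : ∀ x : EuclideanSpace ℝ (Fin n), 0 < x ⟨0, hn⟩ → ∀ t : ℝ,
      (pdt w x t - plap w x t) * Real.sign (w x t) ≤ - h |w x t|)
    (hbc : ∀ x : EuclideanSpace ℝ (Fin n), x ⟨0, hn⟩ = 0 → ∀ t : ℝ, w x t = 0) :
    ∀ x : EuclideanSpace ℝ (Fin n), 0 < x ⟨0, hn⟩ → ∀ t : ℝ, w x t ≤ 0 := by
  intro x₀ hx₀ t₀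
  by_contra hcon
  push_neg at hcon
  set i0 : Fin n := ⟨0, hn⟩ with hi0
  set a : ℝ := w x₀ t₀ with ha_def
  have ha : 0 < a := hcon
  obtain ⟨M, hM⟩ := hbdd
  have haM : a ≤ M := (le_abs_self _).trans (hM x₀ t₀)
  -- the positive minimum of h on [a, M]
  have hsub : Icc a M ⊆ Ici 0 := fun s hs => le_trans ha.le hs.1
  obtain ⟨s₀, hs₀, hmin⟩ := isCompact_Icc.exists_isMinOn ⟨a, left_mem_Icc.mpr haM⟩
    (hcont.mono hsub)
  set m : ℝ := h s₀ with hm_def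
  have hm : 0 < m := hpos s₀ (lt_of_lt_of_le ha hs₀.1)
  -- parameters
  set ε : ℝ := m / (8 * ((n : ℝ) + 1)) with hε_def
  have hε : 0 < ε := by positivity
  set μ : ℝ := m / 4 with hμ_def
  have hμ : 0 < μ := by positivity
  set T : ℝ := (M + 1) / μ with hT_def
  have hMpos : 0 < M + 1 := by linarith
  have hT : 0 < T := by positivity
  have hμT : μ * T = M + 1 := by
    rw [hT_def]; field_simp
  set R : ℝ := Real.sqrt ((M + 1) / ε) with hR_def
  have hRsq : R ^ 2 = (M + 1) / ε := Real.sq_sqrt (by positivity)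
  have hR : 0 < R := Real.sqrt_pos.mpr (by positivity)
  have hεR : ε * R ^ 2 = M + 1 := by
    rw [hRsq]; field_simp
  -- the compact region
  set S : Set (EuclideanSpace ℝ (Fin n)) := {x | 0 ≤ x i0} with hS_def
  have hSclosed : IsClosed S := isClosed_le continuous_const (EuclideanSpace.proj i0).continuous
  set K : Set (EuclideanSpace ℝ (Fin n)) := closedBall x₀ R ∩ S with hK_def
  have hKcomp : IsCompact K := (isCompact_closedBall x₀ R).inter_right hSclosed
  set Q : Set (EuclideanSpace ℝ (Fin n) × ℝ) := K ×ˢ Icc (t₀ - T) t₀ with hQ_def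
  have hQcomp : IsCompact Q := hKcomp.prod isCompact_Icc
  -- the comparison function
  set Φ : EuclideanSpace ℝ (Fin n) × ℝ → ℝ :=
    fun p => w p.1 p.2 - ε * ‖p.1 - x₀‖ ^ 2 + μ * (p.2 - t₀) with hΦ_def
  have hΦc : ContinuousOn Φ Q := by
    have h1 : ContinuousOn (fun p : EuclideanSpace ℝ (Fin n) × ℝ => w p.1 p.2) Q := by
      apply hc.mono
      rintro ⟨x, t⟩ ⟨hx, -⟩
      exact ⟨hx.2, mem_univ _⟩
    have h2 : Continuous (fun p : EuclideanSpace ℝ (Fin n) × ℝ => ε * ‖p.1 - x₀‖ ^ 2) := by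
      fun_prop
    have h3 : Continuous (fun p : EuclideanSpace ℝ (Fin n) × ℝ => μ * (p.2 - t₀)) := by
      fun_prop
    exact (h1.sub h2.continuousOn).add h3.continuousOn
  have hx₀S : x₀ ∈ S := by
    show 0 ≤ x₀ i0
    exact hx₀.le
  have hx₀K : x₀ ∈ K := mem_inter (mem_closedBall_self hR.le) hx₀S
  have hx₀Q : (x₀, t₀) ∈ Q := mem_prod.mpr ⟨hx₀K, mem_Icc.mpr ⟨by linarith, le_refl t₀⟩⟩
  have hQne : Q.Nonempty := ⟨(x₀, t₀), hx₀Q⟩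
  obtain ⟨⟨x₁, t₁⟩, hp, hmax⟩ := hQcomp.exists_isMaxOn hQne hΦc
  obtain ⟨hx₁K, ht₁⟩ := hp
  have hx₁S : 0 ≤ x₁ i0 := hx₁K.2
  have hx₁B : x₁ ∈ closedBall x₀ R := hx₁K.1
  replace ht₁ : t₁ ∈ Icc (t₀ - T) t₀ := ht₁
  have hΦx₀ : Φ (x₀, t₀) = a := by simp [hΦ_def, ha_def]
  have hA : a ≤ Φ (x₁, t₁) := by
    have h9 : Φ (x₀, t₀) ≤ Φ (x₁, t₁) := hmax hx₀Q
    rwa [hΦx₀] at h9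
  have hnormsq : (0:ℝ) ≤ ε * ‖x₁ - x₀‖ ^ 2 := by positivity
  have ht₁le : μ * (t₁ - t₀) ≤ 0 := mul_nonpos_of_nonneg_of_nonpos hμ.le (by linarith [ht₁.2])
  have hw₁ : a ≤ w x₁ t₁ := by
    have : a ≤ w x₁ t₁ - ε * ‖x₁ - x₀‖ ^ 2 + μ * (t₁ - t₀) := hA
    linarith
  have hw₁M : w x₁ t₁ ≤ M := (le_abs_self _).trans (hM x₁ t₁)
  have hx₁pos : 0 < x₁ i0 := by
    rcases eq_or_lt_of_le hx₁S with heq | hlt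
    · exfalso
      have : w x₁ t₁ = 0 := hbc x₁ heq.symm t₁
      linarith
    · exact hlt
  have hx₁R : ‖x₁ - x₀‖ < R := by
    by_contra hge
    push_neg at hge
    have hle : ‖x₁ - x₀‖ ≤ R := by
      rwa [mem_closedBall, dist_eq_norm] at hx₁B
    have heq : ‖x₁ - x₀‖ ^ 2 = R ^ 2 := by
      rw [le_antisymm hle hge]
    have : Φ (x₁, t₁) ≤ M - (M + 1) + 0 := by
      have : Φ (x₁, t₁) = w x₁ t₁ - ε * ‖x₁ - x₀‖ ^ 2 + μ * (t₁ - t₀) := rfl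
      rw [this, heq]
      linarith [hεR]
    linarith
  have ht₁lt : t₀ - T < t₁ := by
    rcases eq_or_lt_of_le ht₁.1 with heq | hlt
    · exfalso
      have h5 : Φ (x₁, t₁) = w x₁ t₁ - ε * ‖x₁ - x₀‖ ^ 2 + μ * (t₁ - t₀) := rfl
      have h6 : μ * (t₁ - t₀) = -(M + 1) := by
        rw [← heq, show t₀ - T - t₀ = -T by ring, mul_neg, hμT]
      rw [h6] at h5
      have h7 : Φ (x₁, t₁) ≤ M - 0 + -(M + 1) := by rw [h5]; linarith
      linarith
    · exact hlt
  -- spatial part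
  set Ω : Set (EuclideanSpace ℝ (Fin n)) := {x | 0 < x i0} with hΩ_def
  have hΩo : IsOpen Ω := isOpen_lt continuous_const (EuclideanSpace.proj i0).continuous
  set U : Set (EuclideanSpace ℝ (Fin n)) := ball x₀ R ∩ Ω with hU_def
  have hUo : IsOpen U := isOpen_ball.inter hΩo
  have hx₁Ω : x₁ ∈ Ω := hx₁pos
  have hx₁U : x₁ ∈ U := ⟨by rwa [mem_ball, dist_eq_norm], hx₁Ω⟩
  have hspace : ContDiffOn ℝ 2 (fun x => w x t₁) Ω := hreg.1 t₁ (mem_univ _)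
  have hplap_i : ∀ i : Fin n,
      iteratedDeriv 2 (fun s : ℝ => w (x₁ + s • EuclideanSpace.single i (1:ℝ)) t₁) 0 ≤ 2 * ε := by
    intro i
    set e : EuclideanSpace ℝ (Fin n) := EuclideanSpace.single i (1:ℝ) with he_def
    have hL0 : x₁ + (0:ℝ) • e = x₁ := by simp
    have hLcd : ContDiff ℝ 2 (fun s : ℝ => x₁ + s • e) :=
      contDiff_const.add (contDiff_id.smul contDiff_const)
    have hW : ContDiffAt ℝ 2 (fun s : ℝ => w (x₁ + s • e) t₁) 0 := by
      have hg : ContDiffAt ℝ 2 (fun x => w x t₁) (x₁ + (0:ℝ) • e) := by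
        rw [hL0]
        exact hspace.contDiffAt (hΩo.mem_nhds hx₁Ω)
      exact hg.comp 0 hLcd.contDiffAt
    have hne : ‖e‖ = 1 := by rw [he_def, EuclideanSpace.norm_single]; norm_num
    set B : ℝ := -(2 * ε * (inner ℝ (x₁ - x₀) e : ℝ)) with hB_def
    set C : ℝ := μ * (t₁ - t₀) - ε * ‖x₁ - x₀‖ ^ 2 with hC_def
    have hexp : ∀ s : ℝ, Φ (x₁ + s • e, t₁)
        = w (x₁ + s • e) t₁ + ((-ε) * s ^ 2 + B * s + C) := by
      intro s
      have h1 : x₁ + s • e - x₀ = (x₁ - x₀) + s • e := by abel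
      have h2 : ‖x₁ + s • e - x₀‖ ^ 2
          = ‖x₁ - x₀‖ ^ 2 + 2 * (inner ℝ (x₁ - x₀) e : ℝ) * s + s ^ 2 := by
        rw [h1, norm_add_sq_real, real_inner_smul_right, norm_smul, hne]
        rw [mul_one, Real.norm_eq_abs, sq_abs]
        ring
      show w (x₁ + s • e) t₁ - ε * ‖x₁ + s • e - x₀‖ ^ 2 + μ * (t₁ - t₀) = _
      rw [h2, hB_def, hC_def]
      ring
    have hlmax : IsLocalMax (fun s : ℝ => Φ (x₁ + s • e, t₁)) 0 := by
      have hU0 : (fun s : ℝ => x₁ + s • e) ⁻¹' U ∈ nhds (0:ℝ) := by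
        apply hLcd.continuous.continuousAt.preimage_mem_nhds
        rw [hL0]
        exact hUo.mem_nhds hx₁U
      filter_upwards [hU0] with s hs
      have hsΩ : (0:ℝ) < (x₁ + s • e) i0 := hs.2
      have hsS : x₁ + s • e ∈ S := by
        show (0:ℝ) ≤ (x₁ + s • e) i0
        exact hsΩ.le
      have hsQ : (x₁ + s • e, t₁) ∈ Q :=
        mem_prod.mpr ⟨mem_inter (ball_subset_closedBall hs.1) hsS, ht₁⟩
      have h3 : Φ (x₁ + s • e, t₁) ≤ Φ (x₁, t₁) := hmax hsQ
      show Φ (x₁ + s • e, t₁) ≤ Φ (x₁ + (0:ℝ) • e, t₁)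
      rwa [hL0]
    have hfun : (fun s : ℝ => Φ (x₁ + s • e, t₁))
        = fun s => w (x₁ + s • e) t₁ + ((-ε) * s ^ 2 + B * s + C) := funext hexp
    have hcd2 : ContDiffAt ℝ 2 (fun s : ℝ => Φ (x₁ + s • e, t₁)) 0 := by
      rw [hfun]
      exact hW.add (contDiff_quadratic _ _ _).contDiffAt
    have hd2 := deriv2_nonpos_of_isLocalMax hcd2 hlmax
    rw [hfun, deriv2_add_quadratic hW] at hd2
    have hit : iteratedDeriv 2 (fun s : ℝ => w (x₁ + s • e) t₁) 0
        = deriv (deriv (fun s : ℝ => w (x₁ + s • e) t₁)) 0 := by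
      rw [iteratedDeriv_succ, iteratedDeriv_one]
    rw [hit]
    linarith
  have hplap : plap w x₁ t₁ ≤ (n:ℝ) * (2 * ε) := by
    have h0 : plap w x₁ t₁ = ∑ i : Fin n,
        iteratedDeriv 2 (fun s : ℝ => w (x₁ + s • EuclideanSpace.single i (1:ℝ)) t₁) 0 := rfl
    rw [h0]
    calc ∑ i : Fin n, iteratedDeriv 2
          (fun s : ℝ => w (x₁ + s • EuclideanSpace.single i (1:ℝ)) t₁) 0
        ≤ ∑ _i : Fin n, 2 * ε := Finset.sum_le_sum (fun i _ => hplap_i i)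
      _ = (n:ℝ) * (2 * ε) := by
          rw [Finset.sum_const, Finset.card_univ, Fintype.card_fin, nsmul_eq_mul]
  -- time part
  have htime : ContDiff ℝ 1 (fun s => w x₁ s) := contDiffOn_univ.mp (hreg.2 x₁ hx₁Ω)
  have hfd : DifferentiableAt ℝ (fun s => w x₁ s) t₁ :=
    (htime.differentiable one_ne_zero).differentiableAt
  set c' : ℝ := -(ε * ‖x₁ - x₀‖ ^ 2) - μ * t₀ with hc'_def
  have hft_eq : (fun t => Φ (x₁, t)) = fun t => w x₁ t + (μ * t + c') := by
    funext t
    show w x₁ t - ε * ‖x₁ - x₀‖ ^ 2 + μ * (t - t₀) = _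
    rw [hc'_def]
    ring
  have haff : ∀ t : ℝ, HasDerivAt (fun t : ℝ => μ * t + c') μ t := fun t => by
    simpa using ((hasDerivAt_id t).const_mul μ).add_const c'
  have hder : 0 ≤ deriv (fun t => Φ (x₁, t)) t₁ := by
    apply deriv_nonneg_of_max_left ht₁lt
    · rw [hft_eq]
      exact hfd.add (haff t₁).differentiableAt
    · intro t ht
      have hmem : (x₁, t) ∈ Q := mem_prod.mpr ⟨hx₁K, mem_Icc.mpr ⟨ht.1.le, ht.2.le.trans ht₁.2⟩⟩
      exact hmax hmem
  have hderiv_val : deriv (fun t => Φ (x₁, t)) t₁ = deriv (fun s => w x₁ s) t₁ + μ := by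
    rw [hft_eq, deriv_fun_add hfd (haff t₁).differentiableAt, (haff t₁).deriv]
  have hpdt : -μ ≤ pdt w x₁ t₁ := by
    have h0 : pdt w x₁ t₁ = deriv (fun s => w x₁ s) t₁ := rfl
    rw [h0]
    linarith [hder, hderiv_val.symm.le, hderiv_val.le]
  -- conclusion
  have hwpos : 0 < w x₁ t₁ := lt_of_lt_of_le ha hw₁
  have hsign : Real.sign (w x₁ t₁) = 1 := Real.sign_of_pos hwpos
  have habs : |w x₁ t₁| = w x₁ t₁ := abs_of_pos hwpos
  have hhm : m ≤ h (w x₁ t₁) := hmin ⟨hw₁, hw₁M⟩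
  have hfinal := hineq x₁ hx₁pos t₁
  rw [hsign, habs, mul_one] at hfinal
  have hεn : (n:ℝ) * (2 * ε) ≤ m / 4 := by
    have h8 : (0:ℝ) < 8 * ((n:ℝ) + 1) := by positivity
    rw [hε_def]
    rw [show (n:ℝ) * (2 * (m / (8 * ((n:ℝ) + 1)))) = ((n:ℝ) * (2 * m)) / (8 * ((n:ℝ) + 1)) by
      ring]
    rw [div_le_div_iff₀ h8 (by norm_num : (0:ℝ) < 4)]
    have hnn : (0:ℝ) ≤ (n:ℝ) * m := mul_nonneg (Nat.cast_nonneg n) hm.le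
    nlinarith [hnn, hm.le]
  linarith [hfinal, hhm, hplap, hpdt, hεn, hm]


/-- Proposition `propF`, half-space case with Dirichlet boundary condition: a bounded function,
continuous on the closed half-space, `C^{2,1}` in the open half-space, satisfying
`(w_t - Δw) · sign w ≤ -h(|w|)` there and vanishing on the boundary, must vanish identically. -/
theorem liouville_sign_inequality_halfspace
    (n : ℕ) (hn : 0 < n) (h : ℝ → ℝ)
    (hcont : ContinuousOn h (Ici 0)) (hpos : ∀ s : ℝ, 0 < s → 0 < h s)
    (w : EuclideanSpace ℝ (Fin n) → ℝ → ℝ)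
    (hbdd : ∃ M : ℝ, ∀ x t, |w x t| ≤ M)
    (hc : ContinuousOn (fun p : EuclideanSpace ℝ (Fin n) × ℝ => w p.1 p.2)
      ({x : EuclideanSpace ℝ (Fin n) | 0 ≤ x ⟨0, hn⟩} ×ˢ univ))
    (hreg : isC21On w {x : EuclideanSpace ℝ (Fin n) | 0 < x ⟨0, hn⟩} univ)
    (hineq : ∀ x : EuclideanSpace ℝ (Fin n), 0 < x ⟨0, hn⟩ → ∀ t : ℝ,
      (pdt w x t - plap w x t) * Real.sign (w x t) ≤ - h |w x t|)
    (hbc : ∀ x : EuclideanSpace ℝ (Fin n), x ⟨0, hn⟩ = 0 → ∀ t : ℝ, w x t = 0) :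
    ∀ x : EuclideanSpace ℝ (Fin n), 0 ≤ x ⟨0, hn⟩ → ∀ t : ℝ, w x t = 0 := by
  have key1 := key_halfspace n hn h hcont hpos w hbdd hc hreg hineq hbc
  have key2 := key_halfspace n hn h hcont hpos (fun x t => -(w x t))
    (by
      obtain ⟨M, hM⟩ := hbdd
      exact ⟨M, fun x t => by simpa using hM x t⟩)
    (by exact hc.neg)
    (by exact ⟨fun t ht => (hreg.1 t ht).neg, fun x hx => (hreg.2 x hx).neg⟩)
    (by
      intro x hx t
      have e1 : pdt (fun x t => -(w x t)) x t = -(pdt w x t) := deriv.neg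
      have e2 : plap (fun x t => -(w x t)) x t = -(plap w x t) := by
        show (∑ i : Fin n, iteratedDeriv 2
            (fun s : ℝ => -(w (x + s • EuclideanSpace.single i (1:ℝ)) t)) 0)
          = -(∑ i : Fin n, iteratedDeriv 2
            (fun s : ℝ => w (x + s • EuclideanSpace.single i (1:ℝ)) t) 0)
        rw [← Finset.sum_neg_distrib]
        exact Finset.sum_congr rfl (fun i _ => iteratedDeriv_neg 2 _ 0)
      have e3 : Real.sign (-(w x t)) = -Real.sign (w x t) := Real.sign_neg
      have e4 : |(-(w x t))| = |w x t| := abs_neg _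
      rw [e1, e2, e3, e4]
      calc (-pdt w x t - -plap w x t) * -Real.sign (w x t)
          = (pdt w x t - plap w x t) * Real.sign (w x t) := by ring
        _ ≤ - h |w x t| := hineq x hx t)
    (fun x hx t => by show -(w x t) = 0; rw [hbc x hx t, neg_zero])
  intro x hx t
  rcases eq_or_lt_of_le hx with heq | hlt
  · exact hbc x heq.symm t
  · have h1 := key1 x hlt t
    have h2 := key2 x hlt t
    simp only [neg_nonpos] at h2
    linarith
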